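/- Let G be any graph on vertex set [n], let 2d ≤ n, and define deg_G(I) as the number of 2d-element cliques of G containing I, and C_{2d} as the number of 2d-cliques in G (assumed nonzero). Define Ẽ[x_I] = (deg_G(I)/C_{2d})·(C(ω,|I|)/C(2d,|I|)) for |I| ≤ 2d and extend multilinearly to polynomials of degree at most 2d. Then Ẽ satisfies the constraint equalities: Ẽ[x_I·(x_i − x_i²)] = 0 for all appropriate I,i; Ẽ[x_I · x_i x_j] = 0 whenever {i,j} is not an edge of G; and Ẽ[x_I · (Σ_i x_i − ω)] = 0 for |I| ≤ 2d−1. -/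

import Mathlib

open MvPolynomial

/-- `deg_G(I)`: the number of `2d`-element cliques of `G` containing `I`.
(Taking `I = ∅` gives `C_{2d}`, the number of `2d`-cliques of `G`.) -/
noncomputable def degG {n : ℕ} (G : SimpleGraph (Fin n)) (d : ℕ)
    (I : Finset (Fin n)) : ℕ :=
  Nat.card {s : Finset (Fin n) //
    I ⊆ s ∧ s.card = 2 * d ∧ G.IsClique (s : Set (Fin n))}

/-- The MPW value on the multilinear monomial `x_I`:
`(deg_G(I)/C_{2d})·(C(ω,|I|)/C(2d,|I|))`, where `C(ω,k)` is the generalized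
binomial coefficient of the real number `ω`. -/
noncomputable def mpwVal {n : ℕ} (G : SimpleGraph (Fin n)) (d : ℕ) (ω : ℝ)
    (I : Finset (Fin n)) : ℝ :=
  ((degG G d I : ℝ) / (degG G d ∅ : ℝ)) *
    (((∏ x ∈ Finset.range I.card, (ω - (x : ℝ))) / (I.card.factorial : ℝ)) /
      (((2 * d).choose I.card : ℝ)))

/-- The multilinear extension of a set function `f` to a (pseudo-expectation)
functional on polynomials: each monomial `x^α` is evaluated as `f (supp α)`. -/
noncomputable def multilinearExt {n : ℕ} (f : Finset (Fin n) → ℝ)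
    (p : MvPolynomial (Fin n) ℝ) : ℝ :=
  ∑ α ∈ p.support, p.coeff α * f α.support


open Finset

open MvPolynomial Finset

variable {n : ℕ}

lemma mlE_eq (f : Finset (Fin n) → ℝ) (p : MvPolynomial (Fin n) ℝ)
    {s : Finset ((Fin n) →₀ ℕ)} (hs : p.support ⊆ s) :
    multilinearExt f p = ∑ α ∈ s, p.coeff α * f α.support := by
  unfold multilinearExt
  refine Finset.sum_subset (f := fun α => p.coeff α * f α.support) hs
    (fun α _ hα => ?_)
  show p.coeff α * f α.support = 0; rw [MvPolynomial.notMem_support_iff.mp hα, zero_mul]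

lemma mlE_add (f : Finset (Fin n) → ℝ) (p q : MvPolynomial (Fin n) ℝ) :
    multilinearExt f (p + q) = multilinearExt f p + multilinearExt f q := by
  rw [mlE_eq f (p+q) MvPolynomial.support_add,
      mlE_eq f p Finset.subset_union_left, mlE_eq f q Finset.subset_union_right,
      ← Finset.sum_add_distrib]
  simp [coeff_add, add_mul]

lemma mlE_neg (f : Finset (Fin n) → ℝ) (p : MvPolynomial (Fin n) ℝ) :
    multilinearExt f (-p) = - multilinearExt f p := by
  unfold multilinearExt
  rw [MvPolynomial.support_neg, ← Finset.sum_neg_distrib]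
  simp

lemma mlE_sub (f : Finset (Fin n) → ℝ) (p q : MvPolynomial (Fin n) ℝ) :
    multilinearExt f (p - q) = multilinearExt f p - multilinearExt f q := by
  rw [sub_eq_add_neg, mlE_add, mlE_neg, sub_eq_add_neg]

lemma mlE_monomial (f : Finset (Fin n) → ℝ) (α : (Fin n) →₀ ℕ) (c : ℝ) :
    multilinearExt f (monomial α c) = c * f α.support := by
  classical
  unfold multilinearExt
  rcases eq_or_ne c 0 with h | h
  · simp [h, support_monomial]
  · simp [support_monomial, h, coeff_monomial]

lemma mlE_sum (f : Finset (Fin n) → ℝ) {ι : Type*} (t : Finset ι)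
    (g : ι → MvPolynomial (Fin n) ℝ) :
    multilinearExt f (∑ i ∈ t, g i) = ∑ i ∈ t, multilinearExt f (g i) := by
  classical
  induction t using Finset.induction_on with
  | empty => simp [multilinearExt]
  | insert _ _ h ih => rw [Finset.sum_insert h, Finset.sum_insert h, mlE_add, ih]

lemma prodX (I : Finset (Fin n)) :
    (∏ j ∈ I, X j : MvPolynomial (Fin n) ℝ)
      = monomial (∑ j ∈ I, Finsupp.single j 1) 1 := by
  classical
  induction I using Finset.induction_on with
  | empty => simp
  | insert _ _ h ih =>
      rw [Finset.prod_insert h, ih, Finset.sum_insert h, X, monomial_mul, one_mul]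

lemma supp_sum_single (I : Finset (Fin n)) :
    (∑ j ∈ I, Finsupp.single j (1:ℕ)).support = I := by
  classical
  rw [Finsupp.support_sum_eq_biUnion]
  · simp [Finsupp.support_single_ne_zero]
  · intro i j hij
    simp [Finsupp.support_single_ne_zero, hij, hij.symm]

lemma supp_add (u v : (Fin n) →₀ ℕ) :
    (u + v).support = u.support ∪ v.support := by
  ext a
  simp only [Finsupp.mem_support_iff, Finsupp.add_apply, Finset.mem_union]
  omega

open scoped Classical in
lemma degG_eq_card {d : ℕ} (G : SimpleGraph (Fin n)) (I : Finset (Fin n)) :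
    degG G d I = (Finset.univ.filter fun s : Finset (Fin n) =>
      I ⊆ s ∧ s.card = 2 * d ∧ G.IsClique (s : Set (Fin n))).card := by
  classical
  rw [degG, Nat.card_eq_fintype_card, Fintype.card_subtype]

lemma degG_nonedge {d : ℕ} (G : SimpleGraph (Fin n)) {i j : Fin n}
    (hij : i ≠ j) (hadj : ¬ G.Adj i j) {J : Finset (Fin n)}
    (hi : i ∈ J) (hj : j ∈ J) : degG G d J = 0 := by
  have : IsEmpty {s : Finset (Fin n) //
      J ⊆ s ∧ s.card = 2 * d ∧ G.IsClique (s : Set (Fin n))} :=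
    ⟨fun ⟨s, h1, _, h3⟩ => hadj (h3 (h1 hi) (h1 hj) hij)⟩
  rw [degG, Nat.card_of_isEmpty]

lemma key_sum {d : ℕ} (G : SimpleGraph (Fin n)) (I : Finset (Fin n)) :
    ∑ i ∈ Iᶜ, degG G d (insert i I) = (2 * d - I.card) * degG G d I := by
  classical
  set P : Finset (Fin n) → Prop :=
    fun s => I ⊆ s ∧ s.card = 2 * d ∧ G.IsClique (s : Set (Fin n)) with hP
  have step : ∀ i ∈ Iᶜ, degG G d (insert i I)
      = ∑ s ∈ Finset.univ.filter P, if i ∈ s then 1 else 0 := by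
    intro i hi
    have heq : (Finset.univ.filter fun s : Finset (Fin n) =>
        insert i I ⊆ s ∧ s.card = 2 * d ∧ G.IsClique (s : Set (Fin n)))
        = (Finset.univ.filter P).filter (fun s => i ∈ s) := by
      rw [Finset.filter_filter]
      apply Finset.filter_congr
      intro s _
      simp only [hP, Finset.insert_subset_iff]
      tauto
    rw [degG_eq_card, heq, Finset.card_filter]
  rw [Finset.sum_congr rfl step, Finset.sum_comm]
  have inner : ∀ s ∈ Finset.univ.filter P,
      (∑ i ∈ Iᶜ, if i ∈ s then 1 else 0) = 2 * d - I.card := by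
    intro s hs
    simp only [hP, Finset.mem_filter] at hs
    rw [← Finset.card_filter]
    have hfe : Iᶜ.filter (· ∈ s) = s \ I := by
      ext a
      simp [Finset.mem_sdiff, and_comm]
    rw [hfe, Finset.card_sdiff_of_subset hs.2.1, hs.2.2.1]
  rw [Finset.sum_congr rfl inner, Finset.sum_const, smul_eq_mul,
    ← degG_eq_card, Nat.mul_comm]

/-- The MPW operator `Ẽ[x_I] = (deg_G(I)/C_{2d})·(C(ω,|I|)/C(2d,|I|))`,
extended multilinearly, satisfies the constraint equalities
`Ẽ[x_I(x_i − x_i²)] = 0`, `Ẽ[x_I x_i x_j] = 0` for non-edges `{i,j}`, and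
`Ẽ[x_I(∑ x_i − ω)] = 0`, at the appropriate degrees. -/
theorem mpw_satisfies_constraints {n d : ℕ} (G : SimpleGraph (Fin n))
    (h2d : 2 * d ≤ n) (hC : degG G d ∅ ≠ 0) (ω : ℝ) :
    (∀ (I : Finset (Fin n)) (i : Fin n), I.card + 2 ≤ 2 * d →
      multilinearExt (mpwVal G d ω) ((∏ j ∈ I, X j) * (X i - X i ^ 2)) = 0) ∧
    (∀ (I : Finset (Fin n)) (i j : Fin n), i ≠ j → ¬ G.Adj i j →
      I.card + 2 ≤ 2 * d →
      multilinearExt (mpwVal G d ω) ((∏ j' ∈ I, X j') * X i * X j) = 0) ∧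
    (∀ I : Finset (Fin n), I.card + 1 ≤ 2 * d →
      multilinearExt (mpwVal G d ω)
        ((∏ j ∈ I, X j) * ((∑ i : Fin n, X i) - C ω)) = 0) := by
  classical
  refine ⟨?_, ?_, ?_⟩
  · intro I i _
    have e1 : (∏ j ∈ I, X j : MvPolynomial (Fin n) ℝ) * X i
        = monomial ((∑ j ∈ I, Finsupp.single j 1) + Finsupp.single i 1) 1 := by
      rw [prodX, X, monomial_mul, one_mul]
    have e2 : (∏ j ∈ I, X j : MvPolynomial (Fin n) ℝ) * X i ^ 2
        = monomial ((∑ j ∈ I, Finsupp.single j 1) + Finsupp.single i 2) 1 := by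
      rw [prodX, X_pow_eq_monomial, monomial_mul, one_mul]
    rw [mul_sub, mlE_sub, e1, e2, mlE_monomial, mlE_monomial,
      supp_add, supp_add, supp_sum_single,
      Finsupp.support_single_ne_zero _ one_ne_zero,
      Finsupp.support_single_ne_zero _ two_ne_zero]
    ring
  · intro I i j hij hadj _
    have e1 : (∏ j' ∈ I, X j' : MvPolynomial (Fin n) ℝ) * X i * X j
        = monomial (((∑ j' ∈ I, Finsupp.single j' 1) + Finsupp.single i 1)
            + Finsupp.single j 1) 1 := by
      rw [prodX, X, X, monomial_mul, monomial_mul, one_mul, one_mul]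
    have hsupp : ((((∑ j' ∈ I, Finsupp.single j' 1) + Finsupp.single i 1)
        + Finsupp.single j 1 : (Fin n) →₀ ℕ)).support = (I ∪ {i}) ∪ {j} := by
      rw [supp_add, supp_add, supp_sum_single,
        Finsupp.support_single_ne_zero _ one_ne_zero,
        Finsupp.support_single_ne_zero _ one_ne_zero]
    have hi : i ∈ (I ∪ {i}) ∪ {j} := by simp
    have hj : j ∈ (I ∪ {i}) ∪ {j} := by simp
    rw [e1, mlE_monomial, one_mul, hsupp, mpwVal,
      degG_nonedge G hij hadj hi hj]
    simp
  · intro I hcard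
    set k := I.card with hk
    set α : (Fin n) →₀ ℕ := ∑ j ∈ I, Finsupp.single j (1:ℕ) with hα
    have expand : (∏ j ∈ I, X j : MvPolynomial (Fin n) ℝ) *
        ((∑ i : Fin n, X i) - C ω)
        = (∑ i : Fin n, monomial (α + Finsupp.single i 1) (1:ℝ))
            - monomial α ω := by
      rw [mul_sub, Finset.mul_sum]
      congr 1
      · exact Finset.sum_congr rfl fun i _ => by
          rw [prodX, X, monomial_mul, one_mul]
      · rw [prodX, C_apply, monomial_mul, one_mul, add_zero]
    have hsupp : ∀ i : Fin n,
        ((α + Finsupp.single i 1 : (Fin n) →₀ ℕ)).support = insert i I := by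
      intro i
      rw [supp_add, supp_sum_single, Finsupp.support_single_ne_zero _ one_ne_zero,
        Finset.union_comm, ← Finset.insert_eq]
    rw [expand, mlE_sub, mlE_sum]
    simp only [mlE_monomial, one_mul, hsupp]
    simp only [hα, supp_sum_single]
    rw [← Finset.sum_add_sum_compl I (fun i => mpwVal G d ω (insert i I))]
    have hin : ∑ i ∈ I, mpwVal G d ω (insert i I) = (k:ℝ) * mpwVal G d ω I := by
      rw [Finset.sum_congr rfl fun i hi => by
        rw [Finset.insert_eq_self.mpr hi]]
      rw [Finset.sum_const, nsmul_eq_mul, hk]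
    -- notation
    set D : ℝ := (degG G d I : ℝ) with hD
    set Cc : ℝ := (degG G d ∅ : ℝ) with hCc
    set Pk : ℝ := ∏ x ∈ Finset.range k, (ω - (x:ℝ)) with hPk
    set B1 : ℝ := ((∏ x ∈ Finset.range (k+1), (ω - (x:ℝ))) /
        ((k+1).factorial : ℝ)) / (((2*d).choose (k+1) : ℝ)) with hB1
    set Bk : ℝ := (Pk / (k.factorial : ℝ)) / (((2*d).choose k : ℝ)) with hBk
    have hout : ∑ i ∈ Iᶜ, mpwVal G d ω (insert i I)
        = (((2*d - k : ℕ) : ℝ) * D / Cc) * B1 := by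
      have hterm : ∀ i ∈ Iᶜ, mpwVal G d ω (insert i I)
          = (degG G d (insert i I) : ℝ) / Cc * B1 := by
        intro i hi
        rw [mpwVal, Finset.card_insert_of_notMem (Finset.mem_compl.mp hi), ← hk,
          hB1, hCc]
      rw [Finset.sum_congr rfl hterm, ← Finset.sum_mul, ← Finset.sum_div,
        ← Nat.cast_sum, key_sum, Nat.cast_mul, mul_div_assoc, ← hD,
        ← mul_div_assoc]
    have hfI : mpwVal G d ω I = D / Cc * Bk := by rw [mpwVal, hBk, hPk, ← hk, hD, hCc]
    have hklt : k + 1 ≤ 2 * d := hcard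
    have hA : (((2*d).choose k : ℕ) : ℝ) ≠ 0 := by
      exact_mod_cast (Nat.choose_pos (le_trans (Nat.le_succ k) hklt)).ne'
    have hA' : (((2*d).choose (k+1) : ℕ) : ℝ) ≠ 0 := by
      exact_mod_cast (Nat.choose_pos hklt).ne'
    have hkf : ((k.factorial : ℕ) : ℝ) ≠ 0 := by
      exact_mod_cast k.factorial_ne_zero
    have hrelR : (((2*d).choose (k+1) : ℕ) : ℝ) * ((k:ℝ)+1)
        = (((2*d).choose k : ℕ) : ℝ) * ((2*d - k : ℕ) : ℝ) := by
      exact_mod_cast congrArg (Nat.cast : ℕ → ℝ) (Nat.choose_succ_right_eq (2*d) k)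
    have key : ((2*d - k : ℕ) : ℝ) * B1 = (ω - (k:ℝ)) * Bk := by
      rw [hB1, hBk, Finset.prod_range_succ, ← hPk, Nat.factorial_succ,
        Nat.cast_mul]
      have h1 : ((k:ℝ)+1) ≠ 0 := by positivity
      rw [Nat.cast_succ, div_div, div_div, mul_div_assoc', mul_div_assoc',
        div_eq_div_iff (mul_ne_zero (mul_ne_zero h1 hkf) hA') (mul_ne_zero hkf hA)]
      linear_combination (-(Pk * (ω - (k:ℝ)) * (k.factorial : ℝ))) * hrelR
    rw [hin, hout, hfI]
    linear_combination (D / Cc) * key
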